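/- The CAP instance constructed from the 3SAT formula φ (as in the context) admits a contiguous allocation (A_i) with v_i(A_i) ≥ 2 for every agent i (i.e., egalitarian social welfare at least 2) if and only if φ is satisfiable. Consequently, the maximum egalitarian social welfare of the constructed instance is at least 2 when φ is satisfiable, and at most 1 otherwise. -/

import Mathlib

/-!
A 3SAT formula over variables `Fin n` with clauses `C j = ℓ_{j,0} ∨ ℓ_{j,1} ∨ ℓ_{j,2}`,
where the literal `C j t : Fin n × Bool` is a variable with its sign
(`true` = positive).  `occCnt … true i` and `occCnt … false i` are the numbers
`o_i` and `ō_i` of occurrences of the literals `x_i` and `x̄_i`, and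
`occRank C j t` is the 0-indexed rank of the occurrence `(j, t)` among the
occurrences of its own literal.

The reduced CAP instance (0-indexed):
* Agents: variable agents `Sum.inl i`, divider agents `Sum.inr (Sum.inl d)`
  (`d : Fin (n+1)`), occurrence agents `Sum.inr (Sum.inr (j, t))`.
* Items `0, …, 6n + 10m + 1` on a path.  Block `V_i` starts at
  `s = blockStart … i = ∑_{p<i} 2(o_p + ō_p + 3)` and consists, in order, of a
  left assignment item `s`, `2o_i` positive occurrence items, a left assignment
  item `s + 2o_i + 1`, two divider items `s + 2o_i + 2`, `s + 2o_i + 3`, a right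
  assignment item `s + 2o_i + 4`, `2ō_i` negative occurrence items, and a right
  assignment item `s + 2(o_i + ō_i) + 5`.  Items `6n+6m` and `6n+6m+1` are two
  further divider items, and for each `j < m` the four clause items of `C j`
  are `6n+6m+2+4j, …, 6n+6m+5+4j`.
* Binary valuations `emaxVal`: variable agent `i` values exactly the four
  assignment items of `V_i`; divider agent `d < n` values exactly the two
  divider items of `V_d`, and `d = n` values exactly `6n+6m` and `6n+6m+1`;
  occurrence agent `(j, t)` with literal `(x, b)` of rank `h` values exactly
  the four clause items of `C j` and the `(2h)`-th and `(2h+1)`-st positive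
  (if `b`) or negative (if `¬b`) occurrence items of `V_x`.

A contiguous allocation is `A : Agent → Finset ℕ` with interval bundles,
pairwise disjoint, covering `Finset.range (6n + 10m + 2)`.  Egalitarian social
welfare at least `2` (every agent values its own bundle at least `2`) is
achievable iff the formula is satisfiable; otherwise every contiguous
allocation gives some agent value at most `1`.
-/

def occRank {n m : ℕ} (C : Fin m → Fin 3 → Fin n × Bool) (j : Fin m) (t : Fin 3) : ℕ :=
  (Finset.univ.filter fun p : Fin m × Fin 3 =>
    C p.1 p.2 = C j t ∧ (p.1 < j ∨ (p.1 = j ∧ p.2 < t))).card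

def occCnt (n m : ℕ) (C : Fin m → Fin 3 → Fin n × Bool) (b : Bool) (i : ℕ) : ℕ :=
  (Finset.univ.filter fun p : Fin m × Fin 3 =>
    ((C p.1 p.2).1 : ℕ) = i ∧ (C p.1 p.2).2 = b).card

def blockStart (n m : ℕ) (C : Fin m → Fin 3 → Fin n × Bool) (i : ℕ) : ℕ :=
  ∑ p ∈ Finset.range i, 2 * (occCnt n m C true p + occCnt n m C false p + 3)

def emaxVal (n m : ℕ) (C : Fin m → Fin 3 → Fin n × Bool) :
    (Fin n ⊕ Fin (n + 1) ⊕ Fin m × Fin 3) → ℕ → ℕ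
  | Sum.inl i, g =>
      let s := blockStart n m C i
      let oi := occCnt n m C true i
      let obi := occCnt n m C false i
      if g = s ∨ g = s + 2 * oi + 1 ∨ g = s + 2 * oi + 4 ∨ g = s + 2 * (oi + obi) + 5
      then 1 else 0
  | Sum.inr (Sum.inl d), g =>
      if (d : ℕ) < n then
        (if g = blockStart n m C d + 2 * occCnt n m C true d + 2 ∨
            g = blockStart n m C d + 2 * occCnt n m C true d + 3 then 1 else 0)
      else (if g = 6 * n + 6 * m ∨ g = 6 * n + 6 * m + 1 then 1 else 0)
  | Sum.inr (Sum.inr (j, t)), g =>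
      let i := ((C j t).1 : ℕ)
      let h := occRank C j t
      let base := if (C j t).2 then blockStart n m C i + 1 + 2 * h
                  else blockStart n m C i + 2 * occCnt n m C true i + 5 + 2 * h
      if g = base ∨ g = base + 1 ∨
         (6 * n + 6 * m + 2 + 4 * (j : ℕ) ≤ g ∧ g < 6 * n + 6 * m + 2 + 4 * (j : ℕ) + 4)
      then 1 else 0

namespace EmaxAux

variable {n m : ℕ} (C : Fin m → Fin 3 → Fin n × Bool)

/-- occurrences of a literal -/
def occs (L : Fin n × Bool) : Finset (Fin m × Fin 3) :=
  Finset.univ.filter fun p : Fin m × Fin 3 => C p.1 p.2 = L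

lemma occCnt_eq (L : Fin n × Bool) : occCnt n m C L.2 (↑L.1) = (occs C L).card := by
  unfold occCnt occs
  congr 1
  apply Finset.filter_congr
  intro p _
  constructor
  · rintro ⟨h1, h2⟩; exact Prod.ext (Fin.val_injective h1) h2
  · rintro rfl; exact ⟨rfl, rfl⟩

lemma blockStart_succ (i : ℕ) :
    blockStart n m C (i + 1) =
      blockStart n m C i + 2 * (occCnt n m C true i + occCnt n m C false i + 3) :=
  Finset.sum_range_succ _ i

lemma blockStart_mono {i i' : ℕ} (h : i ≤ i') : blockStart n m C i ≤ blockStart n m C i' := by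
  apply Finset.sum_le_sum_of_subset
  exact Finset.range_subset_range.2 h

lemma sum_occ : ∑ p ∈ Finset.range n, (occCnt n m C true p + occCnt n m C false p) = 3 * m := by
  have h1 : ∀ p : ℕ, occCnt n m C true p + occCnt n m C false p =
      (Finset.univ.filter fun pr : Fin m × Fin 3 => ((C pr.1 pr.2).1 : ℕ) = p).card := by
    intro p
    unfold occCnt
    rw [add_comm]
    have e1 : (Finset.univ.filter fun pr : Fin m × Fin 3 =>
        ((C pr.1 pr.2).1 : ℕ) = p ∧ (C pr.1 pr.2).2 = false) =
        (Finset.univ.filter fun pr : Fin m × Fin 3 => ((C pr.1 pr.2).1 : ℕ) = p).filter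
          (fun pr => ¬ ((C pr.1 pr.2).2 = true)) := by
      rw [Finset.filter_filter]
      apply Finset.filter_congr
      intro pr _
      simp [Bool.not_eq_true]
    have e2 : (Finset.univ.filter fun pr : Fin m × Fin 3 =>
        ((C pr.1 pr.2).1 : ℕ) = p ∧ (C pr.1 pr.2).2 = true) =
        (Finset.univ.filter fun pr : Fin m × Fin 3 => ((C pr.1 pr.2).1 : ℕ) = p).filter
          (fun pr => (C pr.1 pr.2).2 = true) := by
      rw [Finset.filter_filter]
    rw [e1, e2, add_comm, Finset.card_filter_add_card_filter_not]
  simp only [h1]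
  have := Finset.card_eq_sum_card_fiberwise
    (s := (Finset.univ : Finset (Fin m × Fin 3))) (t := Finset.range n)
    (f := fun pr => ((C pr.1 pr.2).1 : ℕ))
    (fun x _ => Finset.mem_range.2 (C x.1 x.2).1.isLt)
  rw [← this]
  simp [Fintype.card_prod, mul_comm]

lemma blockStart_total : blockStart n m C n = 6 * n + 6 * m := by
  unfold blockStart
  have : ∀ p ∈ Finset.range n, 2 * (occCnt n m C true p + occCnt n m C false p + 3)
      = 2 * (occCnt n m C true p + occCnt n m C false p) + 6 := by intros; ring
  rw [Finset.sum_congr rfl this, Finset.sum_add_distrib, ← Finset.mul_sum, sum_occ]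
  simp
  ring

end EmaxAux

namespace EmaxAux2
open EmaxAux
variable {n m : ℕ} (C : Fin m → Fin 3 → Fin n × Bool)

lemma lex_iff (p : Fin m × Fin 3) (j : Fin m) (t : Fin 3) :
    (p.1 < j ∨ (p.1 = j ∧ p.2 < t)) ↔
      ((p.1 : ℕ) < (j : ℕ) ∨ ((p.1 : ℕ) = (j : ℕ) ∧ (p.2 : ℕ) < (t : ℕ))) := by
  simp only [Fin.lt_def, Fin.ext_iff]

lemma occRank_lt_occRank {p q : Fin m × Fin 3} (hL : C p.1 p.2 = C q.1 q.2)
    (h : (p.1 : ℕ) < (q.1 : ℕ) ∨ ((p.1 : ℕ) = (q.1 : ℕ) ∧ (p.2 : ℕ) < (q.2 : ℕ))) :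
    occRank C p.1 p.2 < occRank C q.1 q.2 := by
  unfold occRank
  apply Finset.card_lt_card
  constructor
  · intro x hx
    rw [Finset.mem_filter] at hx ⊢
    obtain ⟨_, hx1, hx2⟩ := hx
    refine ⟨Finset.mem_univ _, hx1.trans hL, ?_⟩
    rw [lex_iff] at hx2 ⊢
    omega
  · intro hsub
    have : p ∈ Finset.univ.filter fun x : Fin m × Fin 3 =>
        C x.1 x.2 = C q.1 q.2 ∧ (x.1 < q.1 ∨ (x.1 = q.1 ∧ x.2 < q.2)) := by
      rw [Finset.mem_filter, lex_iff]
      exact ⟨Finset.mem_univ _, hL, h⟩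
    have hp := hsub this
    rw [Finset.mem_filter, lex_iff] at hp
    omega

lemma occRank_injOn {p q : Fin m × Fin 3} (hL : C p.1 p.2 = C q.1 q.2)
    (hr : occRank C p.1 p.2 = occRank C q.1 q.2) : p = q := by
  by_contra hne
  have htot : ((p.1 : ℕ) < (q.1 : ℕ) ∨ ((p.1 : ℕ) = (q.1 : ℕ) ∧ (p.2 : ℕ) < (q.2 : ℕ))) ∨
      ((q.1 : ℕ) < (p.1 : ℕ) ∨ ((q.1 : ℕ) = (p.1 : ℕ) ∧ (q.2 : ℕ) < (p.2 : ℕ))) := by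
    have h1 : ¬ ((p.1 : ℕ) = (q.1 : ℕ) ∧ (p.2 : ℕ) = (q.2 : ℕ)) := by
      rintro ⟨h1, h2⟩
      exact hne (Prod.ext (Fin.val_injective h1) (Fin.val_injective h2))
    omega
  rcases htot with h | h
  · exact absurd hr (Nat.ne_of_lt (occRank_lt_occRank C hL h))
  · exact absurd hr.symm (Nat.ne_of_lt (occRank_lt_occRank C hL.symm h))

lemma occRank_lt (j : Fin m) (t : Fin 3) : occRank C j t < (occs C (C j t)).card := by
  unfold occRank occs
  apply Finset.card_lt_card
  constructor
  · intro x hx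
    rw [Finset.mem_filter] at hx ⊢
    exact ⟨hx.1, hx.2.1⟩
  · intro hsub
    have : (j, t) ∈ Finset.univ.filter fun p : Fin m × Fin 3 => C p.1 p.2 = C j t :=
      Finset.mem_filter.2 ⟨Finset.mem_univ _, rfl⟩
    have hp := hsub this
    rw [Finset.mem_filter, lex_iff] at hp
    simp at hp

lemma occRank_surj (L : Fin n × Bool) {h0 : ℕ} (hh : h0 < (occs C L).card) :
    ∃ p ∈ occs C L, occRank C p.1 p.2 = h0 := by
  have key := Finset.surj_on_of_inj_on_of_card_le
    (s := occs C L) (t := Finset.range (occs C L).card)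
    (f := fun p _ => occRank C p.1 p.2)
    (fun p hp => by
      rw [Finset.mem_range]
      have := occRank_lt C p.1 p.2
      rwa [(Finset.mem_filter.1 hp).2] at this)
    (fun p q hp hq heq => occRank_injOn C
      (((Finset.mem_filter.1 hp).2).trans ((Finset.mem_filter.1 hq).2).symm) heq)
    (by rw [Finset.card_range])
    h0 (Finset.mem_range.2 hh)
  obtain ⟨p, hp, he⟩ := key
  exact ⟨p, hp, he.symm⟩

end EmaxAux2

namespace EmaxB
open EmaxAux EmaxAux2

section
variable (n m : ℕ) (C : Fin m → Fin 3 → Fin n × Bool) (σ : Fin n → Bool)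

def nb (j : ℕ) : ℕ :=
  let S := Finset.univ.filter (fun j' : Fin m => j ≤ (j' : ℕ) ∧ ∃ t, ¬ σ (C j' t).1 = (C j' t).2)
  if h : S.Nonempty then 6*n+6*m+2+4*((S.min' h : Fin m) : ℕ) else 6*n+10*m+2

lemma nb_le (j : ℕ) : nb n m C σ j ≤ 6*n+10*m+2 := by
  unfold nb
  simp only []
  split
  · rename_i h
    have := Fin.isLt (Finset.min' _ h)
    omega
  · omega

lemma nb_ge {j : ℕ} (hj : j ≤ m) : 6*n+6*m+2+4*j ≤ nb n m C σ j := by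
  unfold nb
  simp only []
  split
  · rename_i h
    have hmem := Finset.min'_mem _ h
    rw [Finset.mem_filter] at hmem
    omega
  · omega

lemma nb_le_c {j : ℕ} (j' : Fin m) (hj : j ≤ (j' : ℕ))
    (hu : ∃ t, ¬ σ (C j' t).1 = (C j' t).2) :
    nb n m C σ j ≤ 6*n+6*m+2+4*(j' : ℕ) := by
  unfold nb
  have hmem : j' ∈ Finset.univ.filter
      (fun j'' : Fin m => j ≤ (j'' : ℕ) ∧ ∃ t, ¬ σ (C j'' t).1 = (C j'' t).2) :=
    Finset.mem_filter.2 ⟨Finset.mem_univ _, hj, hu⟩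
  rw [dif_pos ⟨j', hmem⟩]
  have := Finset.min'_le _ _ hmem
  omega

lemma exists_block {g : ℕ} (hg : g < blockStart n m C n) :
    ∃ i : ℕ, i < n ∧ blockStart n m C i ≤ g ∧ g < blockStart n m C (i+1) := by
  have key : ∀ k : ℕ, g < blockStart n m C k →
      ∃ i : ℕ, i < k ∧ blockStart n m C i ≤ g ∧ g < blockStart n m C (i+1) := by
    intro k
    induction k with
    | zero => intro h; simp [blockStart] at h
    | succ k ih =>
        intro h
        by_cases hk : g < blockStart n m C k
        · obtain ⟨i, h1, h2⟩ := ih hk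
          exact ⟨i, by omega, h2⟩
        · exact ⟨k, by omega, by omega, h⟩
  exact key n hg

end

/-- generic: two valued items give value at least 2 -/
lemma two_le_sum {A : Finset ℕ} {f : ℕ → ℕ} {v1 v2 : ℕ} (h1 : v1 ∈ A) (h2 : v2 ∈ A)
    (hne : v1 ≠ v2) (hf1 : f v1 = 1) (hf2 : f v2 = 1) : 2 ≤ ∑ g ∈ A, f g := by
  have hsub : {v1, v2} ⊆ A := by
    intro x hx
    rcases Finset.mem_insert.1 hx with rfl | hx
    · exact h1
    · rw [Finset.mem_singleton] at hx; subst hx; exact h2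
  calc 2 = ∑ g ∈ ({v1, v2} : Finset ℕ), f g := by
            rw [Finset.sum_pair hne, hf1, hf2]
    _ ≤ ∑ g ∈ A, f g := Finset.sum_le_sum_of_subset hsub

lemma Ico_disj {a b c d : ℕ} (h : b ≤ c) : Disjoint (Finset.Ico a b) (Finset.Ico c d) := by
  rw [Finset.disjoint_left]
  intro g hg hg'
  rw [Finset.mem_Ico] at hg hg'
  omega

end EmaxB

namespace EmaxB
open EmaxAux EmaxAux2

def bund (n m : ℕ) (C : Fin m → Fin 3 → Fin n × Bool) (σ : Fin n → Bool) :
    (Fin n ⊕ Fin (n + 1) ⊕ Fin m × Fin 3) → Finset ℕ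
  | Sum.inl i =>
      if σ i then
        Finset.Ico (blockStart n m C i + 2 * occCnt n m C true i + 4)
          (blockStart n m C i + 2 * (occCnt n m C true i + occCnt n m C false i) + 6)
      else Finset.Ico (blockStart n m C i) (blockStart n m C i + 2 * occCnt n m C true i + 2)
  | Sum.inr (Sum.inl d) =>
      if hd : (d : ℕ) < n then
        Finset.Ico
          (if σ ⟨d, hd⟩ = true ∧ occCnt n m C true d = 0 then blockStart n m C d
           else blockStart n m C d + 2 * occCnt n m C true d + 2)
          (if σ ⟨d, hd⟩ = false ∧ occCnt n m C false d = 0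
           then blockStart n m C d + 2 * occCnt n m C true d + 6
           else blockStart n m C d + 2 * occCnt n m C true d + 4)
      else Finset.Ico (6*n+6*m) (nb n m C σ 0)
  | Sum.inr (Sum.inr (j, t)) =>
      if σ (C j t).1 = (C j t).2 then
        if (C j t).2 = true then
          Finset.Ico
            (if occRank C j t = 0 then blockStart n m C ((C j t).1 : ℕ)
             else blockStart n m C ((C j t).1 : ℕ) + 1 + 2 * occRank C j t)
            (if occRank C j t + 1 = occCnt n m C true ((C j t).1 : ℕ)
             then blockStart n m C ((C j t).1 : ℕ) + 2 * occCnt n m C true ((C j t).1 : ℕ) + 2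
             else blockStart n m C ((C j t).1 : ℕ) + 3 + 2 * occRank C j t)
        else
          Finset.Ico
            (if occRank C j t = 0
             then blockStart n m C ((C j t).1 : ℕ) + 2 * occCnt n m C true ((C j t).1 : ℕ) + 4
             else blockStart n m C ((C j t).1 : ℕ) + 2 * occCnt n m C true ((C j t).1 : ℕ) + 5
                    + 2 * occRank C j t)
            (if occRank C j t + 1 = occCnt n m C false ((C j t).1 : ℕ)
             then blockStart n m C ((C j t).1 : ℕ)
                    + 2 * (occCnt n m C true ((C j t).1 : ℕ) + occCnt n m C false ((C j t).1 : ℕ)) + 6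
             else blockStart n m C ((C j t).1 : ℕ) + 2 * occCnt n m C true ((C j t).1 : ℕ) + 7
                    + 2 * occRank C j t)
      else
        if ∃ t' : Fin 3, t' < t ∧ ¬ σ (C j t').1 = (C j t').2 then
          Finset.Ico (6*n+6*m+2+4*(j:ℕ) + 2) (nb n m C σ ((j:ℕ)+1))
        else if ∃ t' : Fin 3, t < t' ∧ ¬ σ (C j t').1 = (C j t').2 then
          Finset.Ico (6*n+6*m+2+4*(j:ℕ)) (6*n+6*m+2+4*(j:ℕ) + 2)
        else Finset.Ico (6*n+6*m+2+4*(j:ℕ)) (nb n m C σ ((j:ℕ)+1))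

variable {n m : ℕ} {C : Fin m → Fin 3 → Fin n × Bool} {σ : Fin n → Bool}

lemma bund_isIco (a : Fin n ⊕ Fin (n + 1) ⊕ Fin m × Fin 3) :
    ∃ lo hi, bund n m C σ a = Finset.Ico lo hi := by
  rcases a with i | d | ⟨j, t⟩ <;> simp only [bund]
  · split_ifs <;> exact ⟨_, _, rfl⟩
  · split_ifs <;> exact ⟨_, _, rfl⟩
  · split_ifs <;> exact ⟨_, _, rfl⟩

/-- rank bound, positive form -/
lemma rank_lt_cnt (j : Fin m) (t : Fin 3) :
    occRank C j t < occCnt n m C (C j t).2 ((C j t).1 : ℕ) := by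
  rw [show ((C j t).1 : ℕ) = ((((C j t).1, (C j t).2) : Fin n × Bool).1 : ℕ) from rfl,
    show (C j t).2 = ((((C j t).1, (C j t).2) : Fin n × Bool).2) from rfl,
    occCnt_eq]
  have := EmaxAux2.occRank_lt C j t
  simpa using this

end EmaxB

namespace EmaxB
open EmaxAux EmaxAux2
variable {n m : ℕ} {C : Fin m → Fin 3 → Fin n × Bool} {σ : Fin n → Bool}

lemma bund_inl_subset (i : Fin n) :
    bund n m C σ (Sum.inl i) ⊆
      Finset.Ico (blockStart n m C i) (blockStart n m C ((i : ℕ) + 1)) := by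
  have hs := blockStart_succ C (i : ℕ)
  intro g hg
  simp only [bund] at hg
  split_ifs at hg <;> rw [Finset.mem_Ico] at * <;> omega

lemma bund_div_subset (d : Fin (n + 1)) (hd : (d : ℕ) < n) :
    bund n m C σ (Sum.inr (Sum.inl d)) ⊆
      Finset.Ico (blockStart n m C d) (blockStart n m C ((d : ℕ) + 1)) := by
  have hs := blockStart_succ C (d : ℕ)
  intro g hg
  simp only [bund, dif_pos hd] at hg
  split_ifs at hg <;> rw [Finset.mem_Ico] at * <;> omega

lemma bund_dlast_subset (d : Fin (n + 1)) (hd : ¬ (d : ℕ) < n) :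
    bund n m C σ (Sum.inr (Sum.inl d)) ⊆ Finset.Ico (6*n+6*m) (6*n+10*m+2) := by
  have hnb := nb_le n m C σ 0
  intro g hg
  simp only [bund, dif_neg hd] at hg
  rw [Finset.mem_Ico] at * ; omega

/-- satisfied positive occurrence agent: bundle inside left part of its block -/
lemma bund_occ_pos_subset (j : Fin m) (t : Fin 3) (hsat : σ (C j t).1 = (C j t).2)
    (hb : (C j t).2 = true) :
    bund n m C σ (Sum.inr (Sum.inr (j, t))) ⊆
      Finset.Ico (blockStart n m C ((C j t).1 : ℕ))
        (blockStart n m C ((C j t).1 : ℕ) + 2 * occCnt n m C true ((C j t).1 : ℕ) + 2) := by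
  have hr := rank_lt_cnt (C := C) j t
  rw [hb] at hr
  intro g hg
  simp only [bund, hsat, hb, if_true] at hg
  split_ifs at hg <;> rw [Finset.mem_Ico] at * <;> omega

lemma bund_occ_neg_subset (j : Fin m) (t : Fin 3) (hsat : σ (C j t).1 = (C j t).2)
    (hb : ¬ (C j t).2 = true) :
    bund n m C σ (Sum.inr (Sum.inr (j, t))) ⊆
      Finset.Ico (blockStart n m C ((C j t).1 : ℕ) + 2 * occCnt n m C true ((C j t).1 : ℕ) + 4)
        (blockStart n m C ((C j t).1 : ℕ)
          + 2 * (occCnt n m C true ((C j t).1 : ℕ) + occCnt n m C false ((C j t).1 : ℕ)) + 6) := by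
  have hr := rank_lt_cnt (C := C) j t
  rw [Bool.not_eq_true] at hb
  rw [hb] at hr
  intro g hg
  simp only [bund, hsat, hb, Bool.false_eq_true, if_false, if_true] at hg
  split_ifs at hg <;> rw [Finset.mem_Ico] at * <;> omega

lemma bund_occ_sat_subset (j : Fin m) (t : Fin 3) (hsat : σ (C j t).1 = (C j t).2) :
    bund n m C σ (Sum.inr (Sum.inr (j, t))) ⊆
      Finset.Ico (blockStart n m C ((C j t).1 : ℕ)) (blockStart n m C (((C j t).1 : ℕ) + 1)) := by
  have hs := blockStart_succ C ((C j t).1 : ℕ)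
  by_cases hb : (C j t).2 = true
  · refine (bund_occ_pos_subset j t hsat hb).trans ?_
    apply Finset.Ico_subset_Ico le_rfl; omega
  · refine (bund_occ_neg_subset j t hsat hb).trans ?_
    apply Finset.Ico_subset_Ico (by omega); omega

lemma bund_occ_unsat_subset (j : Fin m) (t : Fin 3) (hsat : ¬ σ (C j t).1 = (C j t).2) :
    bund n m C σ (Sum.inr (Sum.inr (j, t))) ⊆
      Finset.Ico (6*n+6*m+2+4*(j:ℕ)) (6*n+10*m+2) := by
  have hnb := nb_le n m C σ ((j:ℕ)+1)
  have hj := j.isLt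
  intro g hg
  simp only [bund, if_neg hsat] at hg
  split_ifs at hg <;> rw [Finset.mem_Ico] at * <;> omega

/-- block ends are within the block region -/
lemma blockEnd_le {i : ℕ} (hi : i < n) : blockStart n m C (i + 1) ≤ 6*n+6*m := by
  rw [← blockStart_total (C := C)]
  exact blockStart_mono C hi

end EmaxB

namespace EmaxB
open EmaxAux EmaxAux2
variable {n m : ℕ} {C : Fin m → Fin 3 → Fin n × Bool} {σ : Fin n → Bool}

lemma bund_occ_unsat_subset' (j : Fin m) (t : Fin 3) (hsat : ¬ σ (C j t).1 = (C j t).2) :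
    bund n m C σ (Sum.inr (Sum.inr (j, t))) ⊆ Finset.Ico (6*n+6*m) (6*n+10*m+2) :=
  (bund_occ_unsat_subset j t hsat).trans (Finset.Ico_subset_Ico (by omega) le_rfl)

lemma disj_block_block {i i' : ℕ} (hne : i ≠ i') :
    Disjoint (Finset.Ico (blockStart n m C i) (blockStart n m C (i+1)))
      (Finset.Ico (blockStart n m C i') (blockStart n m C (i'+1))) := by
  rcases Nat.lt_or_ge i i' with h | h
  · exact Ico_disj (blockStart_mono C h)
  · exact (Ico_disj (blockStart_mono C (by omega))).symm

lemma disj_block_clause {i : ℕ} (hi : i < n) :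
    Disjoint (Finset.Ico (blockStart n m C i) (blockStart n m C (i+1)))
      (Finset.Ico (6*n+6*m) (6*n+10*m+2)) :=
  Ico_disj (blockEnd_le hi)

section SameBlock
/-- divider vs satisfied occurrence, same block: no σ info needed -/
lemma disj_div_occ (d : Fin (n+1)) (hd : (d : ℕ) < n) (j : Fin m) (t : Fin 3)
    (hsat : σ (C j t).1 = (C j t).2) (hie : ((C j t).1 : ℕ) = (d : ℕ)) :
    Disjoint (bund n m C σ (Sum.inr (Sum.inl d))) (bund n m C σ (Sum.inr (Sum.inr (j, t)))) := by
  have hr := rank_lt_cnt (C := C) j t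
  by_cases hb : (C j t).2 = true
  · rw [hb, hie] at hr
    refine Disjoint.mono (Finset.Subset.refl _) (bund_occ_pos_subset j t hsat hb) ?_
    simp only [bund, dif_pos hd]
    rw [if_neg (c := σ ⟨(d:ℕ), hd⟩ = true ∧ occCnt n m C true (d:ℕ) = 0)
      (by rintro ⟨-, h0⟩; omega)]
    exact (Ico_disj (by rw [hie])).symm
  · rw [Bool.not_eq_true] at hb
    have hr' := hr; rw [hb, hie] at hr'
    refine Disjoint.mono (Finset.Subset.refl _)
      (bund_occ_neg_subset j t hsat (by simp [hb])) ?_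
    simp only [bund, dif_pos hd]
    rw [if_neg (c := σ ⟨(d:ℕ), hd⟩ = false ∧ occCnt n m C false (d:ℕ) = 0)
      (by rintro ⟨-, h0⟩; omega)]
    exact Ico_disj (by rw [hie])

/-- variable vs divider, same block -/
lemma disj_inl_div (i : Fin n) (d : Fin (n+1)) (hd : (d : ℕ) < n) (hie : (i : ℕ) = (d : ℕ)) :
    Disjoint (bund n m C σ (Sum.inl i)) (bund n m C σ (Sum.inr (Sum.inl d))) := by
  have hdi : (⟨(d:ℕ), hd⟩ : Fin n) = i := Fin.ext hie.symm
  by_cases hσi : σ i = true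
  · simp only [bund, dif_pos hd]
    rw [if_pos hσi,
      if_neg (c := σ ⟨(d:ℕ), hd⟩ = false ∧ occCnt n m C false (d:ℕ) = 0)
        (by rw [hdi, hσi]; simp)]
    exact (Ico_disj (by rw [hie])).symm
  · simp only [bund, dif_pos hd]
    rw [if_neg hσi,
      if_neg (c := σ ⟨(d:ℕ), hd⟩ = true ∧ occCnt n m C true (d:ℕ) = 0)
        (by rw [hdi]; rintro ⟨h, -⟩; exact hσi h)]
    exact Ico_disj (by rw [hie])

/-- variable vs satisfied occurrence, same block -/
lemma disj_inl_occ (i : Fin n) (j : Fin m) (t : Fin 3)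
    (hsat : σ (C j t).1 = (C j t).2) (hie : ((C j t).1 : ℕ) = (i : ℕ)) :
    Disjoint (bund n m C σ (Sum.inl i)) (bund n m C σ (Sum.inr (Sum.inr (j, t)))) := by
  have hvi : (C j t).1 = i := Fin.ext hie
  by_cases hσi : σ i = true
  · have hb : (C j t).2 = true := by rw [← hsat, hvi, hσi]
    refine Disjoint.mono (Finset.Subset.refl _) (bund_occ_pos_subset j t hsat hb) ?_
    simp only [bund]
    rw [if_pos hσi]
    exact (Ico_disj (by rw [hie]; omega)).symm
  · have hb : ¬ (C j t).2 = true := by rw [← hsat, hvi]; exact hσi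
    refine Disjoint.mono (Finset.Subset.refl _) (bund_occ_neg_subset j t hsat hb) ?_
    simp only [bund]
    rw [if_neg hσi]
    exact Ico_disj (by rw [hie]; omega)

/-- two satisfied occurrences of the same literal, ordered by rank -/
lemma disj_occ_occ (j j' : Fin m) (t t' : Fin 3) (hL : C j t = C j' t')
    (hsat : σ (C j t).1 = (C j t).2)
    (hr : occRank C j t < occRank C j' t') :
    Disjoint (bund n m C σ (Sum.inr (Sum.inr (j, t))))
      (bund n m C σ (Sum.inr (Sum.inr (j', t')))) := by
  have hsat' : σ (C j' t').1 = (C j' t').2 := by rw [← hL]; exact hsat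
  have hrb := rank_lt_cnt (C := C) j' t'
  have hv : ((C j' t').1 : ℕ) = ((C j t).1 : ℕ) := by rw [hL]
  simp only [bund]
  rw [if_pos hsat, if_pos hsat']
  by_cases hb : (C j t).2 = true
  · have hb' : (C j' t').2 = true := by rw [← hL]; exact hb
    rw [hb'] at hrb
    rw [if_pos hb, if_pos hb',
      if_neg (c := occRank C j t + 1 = occCnt n m C true ((C j t).1 : ℕ))
        (by rw [← hv]; omega),
      if_neg (c := occRank C j' t' = 0) (by omega)]
    split_ifs <;> exact Ico_disj (by rw [hv]; omega)
  · have hb' : ¬ (C j' t').2 = true := by rw [← hL]; exact hb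
    rw [Bool.not_eq_true] at hb hb'
    rw [hb'] at hrb
    rw [if_neg (c := (C j t).2 = true) (by simp [hb]),
      if_neg (c := (C j' t').2 = true) (by simp [hb']),
      if_neg (c := occRank C j t + 1 = occCnt n m C false ((C j t).1 : ℕ))
        (by rw [← hv]; omega),
      if_neg (c := occRank C j' t' = 0) (by omega)]
    split_ifs <;> exact Ico_disj (by rw [hv]; omega)

end SameBlock

end EmaxB

namespace EmaxB
open EmaxAux EmaxAux2
variable {n m : ℕ} {C : Fin m → Fin 3 → Fin n × Bool} {σ : Fin n → Bool}

/-- last divider vs unsatisfied occurrence -/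
lemma disj_dlast_occ (d : Fin (n+1)) (hd : ¬ (d : ℕ) < n) (j : Fin m) (t : Fin 3)
    (hu : ¬ σ (C j t).1 = (C j t).2) :
    Disjoint (bund n m C σ (Sum.inr (Sum.inl d))) (bund n m C σ (Sum.inr (Sum.inr (j, t)))) := by
  refine Disjoint.mono (Finset.Subset.refl _) (bund_occ_unsat_subset j t hu) ?_
  simp only [bund, dif_neg hd]
  exact Ico_disj (nb_le_c n m C σ j (by omega) ⟨t, hu⟩)

/-- unsatisfied occurrences in different clauses, ordered -/
lemma disj_unsat_unsat (j j' : Fin m) (t t' : Fin 3)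
    (hu : ¬ σ (C j t).1 = (C j t).2) (hu' : ¬ σ (C j' t').1 = (C j' t').2)
    (hjj : (j : ℕ) < (j' : ℕ)) :
    Disjoint (bund n m C σ (Sum.inr (Sum.inr (j, t))))
      (bund n m C σ (Sum.inr (Sum.inr (j', t')))) := by
  refine Disjoint.mono (Finset.Subset.refl _) (bund_occ_unsat_subset j' t' hu') ?_
  have hnb : nb n m C σ ((j:ℕ)+1) ≤ 6*n+6*m+2+4*(j':ℕ) :=
    nb_le_c n m C σ (j := (j:ℕ)+1) j' (by omega) ⟨t', hu'⟩
  simp only [bund]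
  rw [if_neg hu]
  split_ifs <;> exact Ico_disj (by omega)

/-- unsatisfied occurrences in the same clause -/
lemma disj_unsat_same (hσ : ∀ j0 : Fin m, ∃ t0, σ (C j0 t0).1 = (C j0 t0).2)
    (j : Fin m) (t t' : Fin 3)
    (hu : ¬ σ (C j t).1 = (C j t).2) (hu' : ¬ σ (C j t').1 = (C j t').2)
    (htt : t < t') :
    Disjoint (bund n m C σ (Sum.inr (Sum.inr (j, t))))
      (bund n m C σ (Sum.inr (Sum.inr (j, t')))) := by
  obtain ⟨t0, ht0⟩ := hσ j
  have hne1 : t0 ≠ t := fun h => hu (h ▸ ht0)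
  have hne2 : t0 ≠ t' := fun h => hu' (h ▸ ht0)
  have hfirst : ¬ ∃ t2 : Fin 3, t2 < t ∧ ¬ σ (C j t2).1 = (C j t2).2 := by
    rintro ⟨t2, ht2, hu2⟩
    have h0 : t0 = t2 ∨ t0 = t ∨ t0 = t' := by
      rw [Fin.lt_def] at ht2 htt
      have h1 := t0.isLt; have h2 := t2.isLt; have h3 := t.isLt; have h4 := t'.isLt
      rcases Nat.lt_or_ge (t0 : ℕ) 3 with _ | _
      · by_contra hc
        push_neg at hc
        obtain ⟨c1, c2, c3⟩ := hc
        have d1 : (t0:ℕ) ≠ (t2:ℕ) := fun h => c1 (Fin.ext h)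
        have d2 : (t0:ℕ) ≠ (t:ℕ) := fun h => c2 (Fin.ext h)
        have d3 : (t0:ℕ) ≠ (t':ℕ) := fun h => c3 (Fin.ext h)
        omega
      · omega
    rcases h0 with rfl | rfl | rfl
    · exact hu2 ht0
    · exact hu ht0
    · exact hu' ht0
  simp only [bund]
  rw [if_neg hu, if_neg hu', if_neg hfirst,
    if_pos (⟨t', htt, hu'⟩ : ∃ t2 : Fin 3, t < t2 ∧ ¬ σ (C j t2).1 = (C j t2).2),
    if_pos (⟨t, htt, hu⟩ : ∃ t2 : Fin 3, t2 < t' ∧ ¬ σ (C j t2).1 = (C j t2).2)]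
  exact Ico_disj le_rfl

theorem bund_disjoint (hσ : ∀ j0 : Fin m, ∃ t0, σ (C j0 t0).1 = (C j0 t0).2) :
    ∀ a a', a ≠ a' → Disjoint (bund n m C σ a) (bund n m C σ a') := by
  have hBC : ∀ (i : ℕ), i < n → ∀ (S T : Finset ℕ),
      S ⊆ Finset.Ico (blockStart n m C i) (blockStart n m C (i+1)) →
      T ⊆ Finset.Ico (6*n+6*m) (6*n+10*m+2) → Disjoint S T :=
    fun i hi S T hS hT => (disj_block_clause hi).mono hS hT
  have hBB : ∀ (i i' : ℕ), i ≠ i' → ∀ (S T : Finset ℕ),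
      S ⊆ Finset.Ico (blockStart n m C i) (blockStart n m C (i+1)) →
      T ⊆ Finset.Ico (blockStart n m C i') (blockStart n m C (i'+1)) → Disjoint S T :=
    fun i i' hne S T hS hT => (disj_block_block hne).mono hS hT
  intro a a' hne
  rcases a with i | d | ⟨j, t⟩ <;> rcases a' with i' | d' | ⟨j', t'⟩
  · -- inl inl
    have : (i : ℕ) ≠ (i' : ℕ) := fun h => hne (congrArg Sum.inl (Fin.ext h))
    exact hBB _ _ this _ _ (bund_inl_subset i) (bund_inl_subset i')
  · -- inl div
    by_cases hd : (d' : ℕ) < n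
    · by_cases hie : (i : ℕ) = (d' : ℕ)
      · exact disj_inl_div i d' hd hie
      · exact hBB _ _ hie _ _ (bund_inl_subset i) (bund_div_subset d' hd)
    · exact hBC _ i.isLt _ _ (bund_inl_subset i) (bund_dlast_subset d' hd)
  · -- inl occ
    by_cases hs : σ (C j' t').1 = (C j' t').2
    · by_cases hie : ((C j' t').1 : ℕ) = (i : ℕ)
      · exact disj_inl_occ i j' t' hs hie
      · exact hBB _ _ (fun h => hie h.symm) _ _ (bund_inl_subset i)
          (bund_occ_sat_subset j' t' hs)
    · exact hBC _ i.isLt _ _ (bund_inl_subset i) (bund_occ_unsat_subset' j' t' hs)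
  · -- div inl
    by_cases hd : (d : ℕ) < n
    · by_cases hie : (i' : ℕ) = (d : ℕ)
      · exact (disj_inl_div i' d hd hie).symm
      · exact hBB _ _ (fun h => hie h.symm) _ _ (bund_div_subset d hd) (bund_inl_subset i')
    · exact (hBC _ i'.isLt _ _ (bund_inl_subset i') (bund_dlast_subset d hd)).symm
  · -- div div
    by_cases hd : (d : ℕ) < n
    · by_cases hd' : (d' : ℕ) < n
      · have : (d : ℕ) ≠ (d' : ℕ) := fun h => hne (by rw [Fin.ext h])
        exact hBB _ _ this _ _ (bund_div_subset d hd) (bund_div_subset d' hd')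
      · exact hBC _ hd _ _ (bund_div_subset d hd) (bund_dlast_subset d' hd')
    · by_cases hd' : (d' : ℕ) < n
      · exact (hBC _ hd' _ _ (bund_div_subset d' hd') (bund_dlast_subset d hd)).symm
      · exfalso
        apply hne
        have : (d : ℕ) = (d' : ℕ) := by
          have := d.isLt; have := d'.isLt; omega
        rw [Fin.ext this]
  · -- div occ
    by_cases hd : (d : ℕ) < n
    · by_cases hs : σ (C j' t').1 = (C j' t').2
      · by_cases hie : ((C j' t').1 : ℕ) = (d : ℕ)
        · exact disj_div_occ d hd j' t' hs hie
        · exact hBB _ _ (fun h => hie h.symm) _ _ (bund_div_subset d hd)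
            (bund_occ_sat_subset j' t' hs)
      · exact hBC _ hd _ _ (bund_div_subset d hd) (bund_occ_unsat_subset' j' t' hs)
    · by_cases hs : σ (C j' t').1 = (C j' t').2
      · exact (hBC _ (C j' t').1.isLt _ _ (bund_occ_sat_subset j' t' hs)
          (bund_dlast_subset d hd)).symm
      · exact disj_dlast_occ d hd j' t' hs
  · -- occ inl
    by_cases hs : σ (C j t).1 = (C j t).2
    · by_cases hie : ((C j t).1 : ℕ) = (i' : ℕ)
      · exact (disj_inl_occ i' j t hs hie).symm
      · exact hBB _ _ hie _ _ (bund_occ_sat_subset j t hs) (bund_inl_subset i')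
    · exact (hBC _ i'.isLt _ _ (bund_inl_subset i') (bund_occ_unsat_subset' j t hs)).symm
  · -- occ div
    by_cases hd : (d' : ℕ) < n
    · by_cases hs : σ (C j t).1 = (C j t).2
      · by_cases hie : ((C j t).1 : ℕ) = (d' : ℕ)
        · exact (disj_div_occ d' hd j t hs hie).symm
        · exact hBB _ _ hie _ _ (bund_occ_sat_subset j t hs) (bund_div_subset d' hd)
      · exact (hBC _ hd _ _ (bund_div_subset d' hd) (bund_occ_unsat_subset' j t hs)).symm
    · by_cases hs : σ (C j t).1 = (C j t).2
      · exact hBC _ (C j t).1.isLt _ _ (bund_occ_sat_subset j t hs) (bund_dlast_subset d' hd)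
      · exact (disj_dlast_occ d' hd j t hs).symm
  · -- occ occ
    have hpair : (j, t) ≠ (j', t') := fun h => hne (by rw [h])
    by_cases hs : σ (C j t).1 = (C j t).2 <;> by_cases hs' : σ (C j' t').1 = (C j' t').2
    · -- both satisfied
      by_cases hie : ((C j t).1 : ℕ) = ((C j' t').1 : ℕ)
      · have hL : C j t = C j' t' := by
          have hv : (C j t).1 = (C j' t').1 := Fin.ext hie
          have hb : (C j t).2 = (C j' t').2 := by rw [← hs, ← hs', hv]
          exact Prod.ext hv hb
        rcases Nat.lt_trichotomy (occRank C j t) (occRank C j' t') with h | h | h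
        · exact disj_occ_occ j j' t t' hL hs h
        · exact absurd (occRank_injOn C (p := (j,t)) (q := (j',t')) hL h) hpair
        · exact (disj_occ_occ j' j t' t hL.symm hs' h).symm
      · exact hBB _ _ hie _ _ (bund_occ_sat_subset j t hs) (bund_occ_sat_subset j' t' hs')
    · exact hBC _ (C j t).1.isLt _ _ (bund_occ_sat_subset j t hs)
        (bund_occ_unsat_subset' j' t' hs')
    · exact (hBC _ (C j' t').1.isLt _ _ (bund_occ_sat_subset j' t' hs')
        (bund_occ_unsat_subset' j t hs)).symm
    · -- both unsatisfied
      rcases Nat.lt_trichotomy (j : ℕ) (j' : ℕ) with h | h | h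
      · exact disj_unsat_unsat j j' t t' hs hs' h
      · have hjj : j = j' := Fin.ext h
        subst hjj
        have htt : t ≠ t' := fun h => hpair (by rw [h])
        rcases Nat.lt_trichotomy (t : ℕ) (t' : ℕ) with h2 | h2 | h2
        · exact disj_unsat_same hσ j t t' hs hs' (Fin.lt_def.2 h2)
        · exact absurd (Fin.ext h2) htt
        · exact (disj_unsat_same hσ j t' t hs' hs (Fin.lt_def.2 h2)).symm
      · exact (disj_unsat_unsat j' j t' t hs' hs h).symm

end EmaxB

namespace EmaxB
open EmaxAux EmaxAux2
variable {n m : ℕ} {C : Fin m → Fin 3 → Fin n × Bool} {σ : Fin n → Bool}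

lemma lt_nb {g j0 : ℕ} (hgN : g < 6*n+10*m+2)
    (hall : ∀ j' : Fin m, j0 ≤ (j':ℕ) → (∃ t0, ¬ σ (C j' t0).1 = (C j' t0).2) →
      g < 6*n+6*m+2+4*(j':ℕ)) :
    g < nb n m C σ j0 := by
  unfold nb
  simp only []
  split
  · rename_i h
    have hmem := Finset.min'_mem _ h
    rw [Finset.mem_filter] at hmem
    exact hall _ hmem.2.1 hmem.2.2
  · exact hgN

/-- a minimal unsatisfied literal position in a clause -/
lemma exists_min_unsat (j : Fin m) (t0 : Fin 3) (h : ¬ σ (C j t0).1 = (C j t0).2) :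
    ∃ t1 : Fin 3, (¬ σ (C j t1).1 = (C j t1).2) ∧
      ∀ t2 : Fin 3, t2 < t1 → σ (C j t2).1 = (C j t2).2 := by
  by_cases u0 : σ (C j 0).1 = (C j 0).2
  · by_cases u1 : σ (C j 1).1 = (C j 1).2
    · refine ⟨t0, h, fun t2 ht2 => ?_⟩
      have h3 := t2.isLt; have h4 := t0.isLt
      rw [Fin.lt_def] at ht2
      have : t2 = 0 ∨ t2 = 1 := by
        rcases Nat.lt_or_ge (t2 : ℕ) 1 with h5 | h5
        · left; exact Fin.ext (by simpa using h5)
        · right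
          apply Fin.ext
          have : (t0 : ℕ) ≠ 0 := fun he => h (by rw [show t0 = 0 from Fin.ext he]; exact u0)
          have : (t0 : ℕ) ≠ 1 := fun he => h (by rw [show t0 = 1 from Fin.ext he]; exact u1)
          omega
      rcases this with rfl | rfl
      · exact u0
      · exact u1
    · refine ⟨1, u1, fun t2 ht2 => ?_⟩
      rw [Fin.lt_def] at ht2
      have : t2 = 0 := Fin.ext (by simpa using ht2)
      rw [this]; exact u0
  · exact ⟨0, u0, fun t2 ht2 => by rw [Fin.lt_def] at ht2; simp at ht2⟩

theorem bund_cover {g : ℕ} (hgN : g < 6*n+10*m+2) : ∃ a, g ∈ bund n m C σ a := by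
  by_cases hg6 : g < 6*n+6*m
  · -- block region
    have hg6' : g < blockStart n m C n := by rw [blockStart_total]; exact hg6
    obtain ⟨i, hi, hlo, hhi⟩ := exists_block n m C hg6'
    have hstep := blockStart_succ C i
    set s := blockStart n m C i with hs
    set o := occCnt n m C true i with ho
    set ob := occCnt n m C false i with hob
    by_cases hσi : σ ⟨i, hi⟩ = true
    · -- right side owned by variable, dividers, left side by positive occurrences
      by_cases hA : s + 2*o + 4 ≤ g
      · refine ⟨Sum.inl ⟨i, hi⟩, ?_⟩
        simp only [bund]
        rw [if_pos hσi, Finset.mem_Ico]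
        exact ⟨hA, by omega⟩
      · by_cases hB : s + 2*o + 2 ≤ g ∨ (o = 0)
        · -- divider (possibly extended left)
          refine ⟨Sum.inr (Sum.inl ⟨i, by omega⟩), ?_⟩
          have hd : ((⟨i, by omega⟩ : Fin (n+1)) : ℕ) < n := hi
          simp only [bund, dif_pos hd]
          rw [Finset.mem_Ico]
          constructor
          · split_ifs with h1
            · omega
            · rcases hB with hB | hB
              · exact hB
              · exact absurd ⟨hσi, hB⟩ h1
          · split_ifs <;> omega
        · -- positive occurrence pair
          push_neg at hB
          obtain ⟨hB1, hB2⟩ := hB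
          obtain ⟨h, hho, hl1, hl2⟩ :
              ∃ h, h < o ∧ (h = 0 ∨ s + 1 + 2*h ≤ g) ∧ (h + 1 = o ∨ g < s + 3 + 2*h) := by
            by_cases h0 : g = s
            · exact ⟨0, by omega, Or.inl rfl, by omega⟩
            · by_cases hq : (g - s - 1)/2 + 2 ≤ o
              · exact ⟨(g - s - 1)/2, by omega, by omega, by omega⟩
              · exact ⟨o - 1, by omega, by omega, by omega⟩
          have hcard : h < (occs C ((⟨i, hi⟩ : Fin n), true)).card := by
            rw [← occCnt_eq]; exact hho
          obtain ⟨p, hp, hrank⟩ := occRank_surj C _ hcard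
          rw [occs, Finset.mem_filter] at hp
          have hC : C p.1 p.2 = (⟨i, hi⟩, true) := hp.2
          refine ⟨Sum.inr (Sum.inr (p.1, p.2)), ?_⟩
          have hsat : σ (C p.1 p.2).1 = (C p.1 p.2).2 := by rw [hC]; exact hσi
          have hb : (C p.1 p.2).2 = true := by rw [hC]
          simp only [bund]
          rw [if_pos hsat, if_pos hb, Finset.mem_Ico, hrank, hC]
          simp only [show ((((⟨i, hi⟩ : Fin n), true) : Fin n × Bool).1 : ℕ) = i from rfl]
          constructor
          · split_ifs <;> omega
          · split_ifs <;> omega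
    · -- σ i = false
      by_cases hA : g < s + 2*o + 2
      · refine ⟨Sum.inl ⟨i, hi⟩, ?_⟩
        simp only [bund]
        rw [if_neg hσi, Finset.mem_Ico]
        exact ⟨hlo, hA⟩
      · by_cases hB : g < s + 2*o + 4 ∨ (ob = 0)
        · refine ⟨Sum.inr (Sum.inl ⟨i, by omega⟩), ?_⟩
          have hd : ((⟨i, by omega⟩ : Fin (n+1)) : ℕ) < n := hi
          have hσi' : σ (⟨i, hi⟩ : Fin n) = false := by
            rw [← Bool.not_eq_true]; exact hσi
          simp only [bund, dif_pos hd]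
          rw [Finset.mem_Ico]
          constructor
          · split_ifs <;> omega
          · split_ifs with h1
            · omega
            · rcases hB with hB | hB
              · exact hB
              · exact absurd ⟨hσi', hB⟩ h1
        · push_neg at hB
          obtain ⟨hB1, hB2⟩ := hB
          obtain ⟨h, hho, hl1, hl2⟩ :
              ∃ h, h < ob ∧ (h = 0 ∨ s + 2*o + 5 + 2*h ≤ g) ∧
                (h + 1 = ob ∨ g < s + 2*o + 7 + 2*h) := by
            by_cases h0 : g = s + 2*o + 4
            · exact ⟨0, by omega, Or.inl rfl, by omega⟩
            · by_cases hq : (g - (s + 2*o + 4) - 1)/2 + 2 ≤ ob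
              · exact ⟨(g - (s + 2*o + 4) - 1)/2, by omega, by omega, by omega⟩
              · exact ⟨ob - 1, by omega, by omega, by omega⟩
          have hcard : h < (occs C ((⟨i, hi⟩ : Fin n), false)).card := by
            rw [← occCnt_eq]; exact hho
          obtain ⟨p, hp, hrank⟩ := occRank_surj C _ hcard
          rw [occs, Finset.mem_filter] at hp
          have hC : C p.1 p.2 = (⟨i, hi⟩, false) := hp.2
          refine ⟨Sum.inr (Sum.inr (p.1, p.2)), ?_⟩
          have hsat : σ (C p.1 p.2).1 = (C p.1 p.2).2 := by
            rw [hC, ← Bool.not_eq_true]; exact hσi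
          have hb : ¬ (C p.1 p.2).2 = true := by rw [hC]; simp
          simp only [bund]
          rw [if_pos hsat, if_neg hb, Finset.mem_Ico, hrank, hC]
          simp only [show ((((⟨i, hi⟩ : Fin n), false) : Fin n × Bool).1 : ℕ) = i from rfl]
          constructor
          · split_ifs <;> omega
          · split_ifs <;> omega
  · -- clause region
    push_neg at hg6
    by_cases hSne : (Finset.univ.filter (fun j' : Fin m =>
        (∃ t0, ¬ σ (C j' t0).1 = (C j' t0).2) ∧ 6*n+6*m+2+4*(j':ℕ) ≤ g)).Nonempty
    · have hmax : ∀ j' : Fin m, (∃ t0, ¬ σ (C j' t0).1 = (C j' t0).2) →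
          6*n+6*m+2+4*(j':ℕ) ≤ g →
          (j':ℕ) ≤ ((Finset.max' _ hSne : Fin m) : ℕ) := by
        intro j' h1 h2
        exact Fin.le_def.1 (Finset.le_max' _ j'
          (Finset.mem_filter.2 ⟨Finset.mem_univ _, h1, h2⟩))
      have hj0mem := Finset.mem_filter.1 (Finset.max'_mem _ hSne)
      set j0 : Fin m := Finset.max' _ hSne with hj0
      obtain ⟨-, ⟨tu, htu⟩, hcle⟩ := hj0mem
      have hltnb : g < nb n m C σ ((j0:ℕ)+1) := by
        apply lt_nb hgN
        intro j' hj' h1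
        by_contra hc
        push_neg at hc
        have := hmax j' h1 hc
        omega
      obtain ⟨t1, ht1, ht1min⟩ := exists_min_unsat j0 tu htu
      have hfirst : ¬ ∃ t2 : Fin 3, t2 < t1 ∧ ¬ σ (C j0 t2).1 = (C j0 t2).2 := by
        rintro ⟨t2, h2, hu2⟩
        exact hu2 (ht1min t2 h2)
      by_cases hu2 : ∃ t2 : Fin 3, t1 < t2 ∧ ¬ σ (C j0 t2).1 = (C j0 t2).2
      · by_cases hg2 : g < 6*n+6*m+2+4*(j0:ℕ) + 2
        · refine ⟨Sum.inr (Sum.inr (j0, t1)), ?_⟩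
          simp only [bund]
          rw [if_neg ht1, if_neg hfirst, if_pos hu2, Finset.mem_Ico]
          omega
        · obtain ⟨t2, ht12, hut2⟩ := hu2
          refine ⟨Sum.inr (Sum.inr (j0, t2)), ?_⟩
          simp only [bund]
          rw [if_neg hut2, if_pos (⟨t1, ht12, ht1⟩ :
            ∃ t' : Fin 3, t' < t2 ∧ ¬ σ (C j0 t').1 = (C j0 t').2), Finset.mem_Ico]
          omega
      · refine ⟨Sum.inr (Sum.inr (j0, t1)), ?_⟩
        simp only [bund]
        rw [if_neg ht1, if_neg hfirst, if_neg hu2, Finset.mem_Ico]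
        omega
    · refine ⟨Sum.inr (Sum.inl ⟨n, by omega⟩), ?_⟩
      have hd : ¬ ((⟨n, by omega⟩ : Fin (n+1)) : ℕ) < n := by simp
      simp only [bund, dif_neg hd]
      rw [Finset.mem_Ico]
      refine ⟨hg6, lt_nb hgN ?_⟩
      intro j' hj' h1
      by_contra hc
      push_neg at hc
      exact hSne ⟨j', Finset.mem_filter.2 ⟨Finset.mem_univ _, h1, hc⟩⟩

end EmaxB

namespace EmaxB
open EmaxAux EmaxAux2
variable {n m : ℕ} {C : Fin m → Fin 3 → Fin n × Bool} {σ : Fin n → Bool}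

noncomputable local instance : DecidableEq (Fin n ⊕ Fin (n + 1) ⊕ Fin m × Fin 3) :=
  Classical.decEq _

lemma bund_sub_range (a : Fin n ⊕ Fin (n + 1) ⊕ Fin m × Fin 3) :
    bund n m C σ a ⊆ Finset.range (6*n+10*m+2) := by
  have key : Finset.Ico (6*n+6*m) (6*n+10*m+2) ⊆ Finset.range (6*n+10*m+2) := by
    intro x hx; rw [Finset.mem_Ico] at hx; rw [Finset.mem_range]; omega
  have keyb : ∀ i : ℕ, i < n →
      Finset.Ico (blockStart n m C i) (blockStart n m C (i+1)) ⊆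
        Finset.range (6*n+10*m+2) := by
    intro i hi x hx
    rw [Finset.mem_Ico] at hx
    have := blockEnd_le (C := C) hi
    rw [Finset.mem_range]
    omega
  rcases a with i | d | ⟨j, t⟩
  · exact (bund_inl_subset i).trans (keyb _ i.isLt)
  · by_cases hd : (d : ℕ) < n
    · exact (bund_div_subset d hd).trans (keyb _ hd)
    · exact (bund_dlast_subset d hd).trans key
  · by_cases hs : σ (C j t).1 = (C j t).2
    · exact (bund_occ_sat_subset j t hs).trans (keyb _ (C j t).1.isLt)
    · exact (bund_occ_unsat_subset' j t hs).trans key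

theorem bund_value (a : Fin n ⊕ Fin (n + 1) ⊕ Fin m × Fin 3) :
    2 ≤ ∑ g ∈ bund n m C σ a, emaxVal n m C a g := by
  rcases a with i | d | ⟨j, t⟩
  · by_cases hσi : σ i = true
    · apply two_le_sum (v1 := blockStart n m C i + 2 * occCnt n m C true i + 4)
        (v2 := blockStart n m C i + 2 * (occCnt n m C true i + occCnt n m C false i) + 5)
      · simp only [bund]; rw [if_pos hσi, Finset.mem_Ico]; omega
      · simp only [bund]; rw [if_pos hσi, Finset.mem_Ico]; omega
      · omega
      · simp [emaxVal]
      · simp [emaxVal]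
    · apply two_le_sum (v1 := blockStart n m C i)
        (v2 := blockStart n m C i + 2 * occCnt n m C true i + 1)
      · simp only [bund]; rw [if_neg hσi, Finset.mem_Ico]; omega
      · simp only [bund]; rw [if_neg hσi, Finset.mem_Ico]; omega
      · omega
      · simp [emaxVal]
      · simp [emaxVal]
  · by_cases hd : (d : ℕ) < n
    · apply two_le_sum (v1 := blockStart n m C d + 2 * occCnt n m C true d + 2)
        (v2 := blockStart n m C d + 2 * occCnt n m C true d + 3)
      · simp only [bund, dif_pos hd]
        rw [Finset.mem_Ico]
        constructor
        · split_ifs <;> omega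
        · split_ifs <;> omega
      · simp only [bund, dif_pos hd]
        rw [Finset.mem_Ico]
        constructor
        · split_ifs <;> omega
        · split_ifs <;> omega
      · omega
      · simp [emaxVal, hd]
      · simp [emaxVal, hd]
    · have hnb := nb_ge n m C σ (j := 0) (by omega)
      apply two_le_sum (v1 := 6*n+6*m) (v2 := 6*n+6*m+1)
      · simp only [bund, dif_neg hd]; rw [Finset.mem_Ico]; omega
      · simp only [bund, dif_neg hd]; rw [Finset.mem_Ico]; omega
      · omega
      · simp [emaxVal, hd]
      · simp [emaxVal, hd]
  · by_cases hs : σ (C j t).1 = (C j t).2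
    · have hr := rank_lt_cnt (C := C) j t
      by_cases hb : (C j t).2 = true
      · rw [hb] at hr
        apply two_le_sum
          (v1 := blockStart n m C ((C j t).1 : ℕ) + 1 + 2 * occRank C j t)
          (v2 := blockStart n m C ((C j t).1 : ℕ) + 1 + 2 * occRank C j t + 1)
        · simp only [bund]
          rw [if_pos hs, if_pos hb, Finset.mem_Ico]
          constructor
          · split_ifs <;> omega
          · split_ifs <;> omega
        · simp only [bund]
          rw [if_pos hs, if_pos hb, Finset.mem_Ico]
          constructor
          · split_ifs <;> omega
          · split_ifs <;> omega
        · omega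
        · simp [emaxVal, hb]
        · simp [emaxVal, hb]
      · rw [Bool.not_eq_true] at hb
        rw [hb] at hr
        apply two_le_sum
          (v1 := blockStart n m C ((C j t).1 : ℕ) + 2 * occCnt n m C true ((C j t).1 : ℕ)
            + 5 + 2 * occRank C j t)
          (v2 := blockStart n m C ((C j t).1 : ℕ) + 2 * occCnt n m C true ((C j t).1 : ℕ)
            + 5 + 2 * occRank C j t + 1)
        · simp only [bund]
          rw [if_pos hs, if_neg (by simp [hb] : ¬ (C j t).2 = true), Finset.mem_Ico]
          constructor
          · split_ifs <;> omega
          · split_ifs <;> omega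
        · simp only [bund]
          rw [if_pos hs, if_neg (by simp [hb] : ¬ (C j t).2 = true), Finset.mem_Ico]
          constructor
          · split_ifs <;> omega
          · split_ifs <;> omega
        · omega
        · simp [emaxVal, hb]
        · simp [emaxVal, hb]
    · have hnb : 6*n+6*m+2+4*((j:ℕ)+1) ≤ nb n m C σ ((j:ℕ)+1) :=
        nb_ge n m C σ (by exact j.isLt)
      by_cases h1 : ∃ t' : Fin 3, t' < t ∧ ¬ σ (C j t').1 = (C j t').2
      · apply two_le_sum (v1 := 6*n+6*m+2+4*(j:ℕ)+2) (v2 := 6*n+6*m+2+4*(j:ℕ)+3)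
        · simp only [bund]; rw [if_neg hs, if_pos h1, Finset.mem_Ico]; omega
        · simp only [bund]; rw [if_neg hs, if_pos h1, Finset.mem_Ico]; omega
        · omega
        · simp only [emaxVal]
          rw [if_pos (by omega)]
        · simp only [emaxVal]
          rw [if_pos (by omega)]
      · apply two_le_sum (v1 := 6*n+6*m+2+4*(j:ℕ)) (v2 := 6*n+6*m+2+4*(j:ℕ)+1)
        · simp only [bund]
          rw [if_neg hs, if_neg h1]
          split_ifs <;> rw [Finset.mem_Ico] <;> omega
        · simp only [bund]
          rw [if_neg hs, if_neg h1]
          split_ifs <;> rw [Finset.mem_Ico] <;> omega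
        · omega
        · simp only [emaxVal]
          rw [if_pos (by omega)]
        · simp only [emaxVal]
          rw [if_pos (by omega)]

end EmaxB

namespace EmaxF
open EmaxAux EmaxAux2

variable {n m : ℕ} {C : Fin m → Fin 3 → Fin n × Bool}
variable {A : (Fin n ⊕ Fin (n + 1) ⊕ Fin m × Fin 3) → Finset ℕ}

lemma both_mem {B : Finset ℕ} {v1 v2 : ℕ} (hne : v1 ≠ v2)
    (h : 2 ≤ ∑ g ∈ B, if g = v1 ∨ g = v2 then 1 else 0) : v1 ∈ B ∧ v2 ∈ B := by
  classical
  have hcard : 2 ≤ (B.filter (fun g => g = v1 ∨ g = v2)).card := by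
    rw [Finset.card_filter]; exact h
  have hsub : B.filter (fun g => g = v1 ∨ g = v2) ⊆ {v1, v2} := by
    intro g hg
    rw [Finset.mem_filter] at hg
    rcases hg.2 with rfl | rfl
    · exact Finset.mem_insert_self _ _
    · exact Finset.mem_insert_of_mem (Finset.mem_singleton_self _)
  have heq : B.filter (fun g => g = v1 ∨ g = v2) = {v1, v2} :=
    Finset.eq_of_subset_of_card_le hsub (by rw [Finset.card_pair hne]; exact hcard)
  constructor
  · exact Finset.filter_subset _ _ (heq ▸ Finset.mem_insert_self v1 {v2})
  · exact Finset.filter_subset _ _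
      (heq ▸ Finset.mem_insert_of_mem (Finset.mem_singleton_self v2))

section Forward
variable (hIco : ∀ i, ∃ a b, A i = Finset.Ico a b)
  (hdis : ∀ i i', i ≠ i' → Disjoint (A i) (A i'))
  (hval : ∀ i, 2 ≤ ∑ g ∈ A i, emaxVal n m C i g)

include hIco in
lemma mem_between {a : Fin n ⊕ Fin (n + 1) ⊕ Fin m × Fin 3} {g1 g2 g : ℕ}
    (h1 : g1 ∈ A a) (h2 : g2 ∈ A a) (hle1 : g1 ≤ g) (hle2 : g ≤ g2) : g ∈ A a := by
  obtain ⟨lo, hi, hE⟩ := hIco a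
  rw [hE] at h1 h2 ⊢
  rw [Finset.mem_Ico] at *
  omega

include hIco hdis hval in
lemma forward_block (i : Fin n) :
    ((blockStart n m C i + 2 * occCnt n m C true i + 4 ∈ A (Sum.inl i)) →
      ∀ g, blockStart n m C i + 2 * occCnt n m C true i + 4 ≤ g →
        g ≤ blockStart n m C i + 2 * (occCnt n m C true i + occCnt n m C false i) + 5 →
        g ∈ A (Sum.inl i)) ∧
    (¬ (blockStart n m C i + 2 * occCnt n m C true i + 4 ∈ A (Sum.inl i)) →
      ∀ g, blockStart n m C i ≤ g → g ≤ blockStart n m C i + 2 * occCnt n m C true i + 1 →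
        g ∈ A (Sum.inl i)) := by
  classical
  set s := blockStart n m C i with hs
  set o := occCnt n m C true i with ho
  set ob := occCnt n m C false i with hob
  -- divider agent owns both divider items
  have hd : ((⟨(i : ℕ), by omega⟩ : Fin (n + 1)) : ℕ) < n := i.isLt
  set dAg : Fin n ⊕ Fin (n + 1) ⊕ Fin m × Fin 3 := Sum.inr (Sum.inl ⟨(i : ℕ), by omega⟩)
    with hdAg
  have hdval := hval dAg
  have hdsum : 2 ≤ ∑ g ∈ A dAg, if g = s + 2*o + 2 ∨ g = s + 2*o + 3 then 1 else 0 := by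
    refine le_trans hdval (le_of_eq (Finset.sum_congr rfl fun g _ => ?_))
    rw [hdAg]
    simp only [emaxVal, if_pos hd]
    rfl
  obtain ⟨hdm1, hdm2⟩ := both_mem (by omega) hdsum
  have hxd : (Sum.inl i : Fin n ⊕ Fin (n + 1) ⊕ Fin m × Fin 3) ≠ dAg := by
    rw [hdAg]; exact fun h => by cases h
  have hv1x : s + 2*o + 2 ∉ A (Sum.inl i) := fun h =>
    Finset.disjoint_left.1 (hdis _ _ hxd) h hdm1
  -- the variable agent's value
  have hxsum : 2 ≤ ∑ g ∈ A (Sum.inl i),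
      if g = s ∨ g = s + 2*o + 1 ∨ g = s + 2*o + 4 ∨ g = s + 2*(o+ob) + 5
      then 1 else 0 := by
    refine le_trans (hval (Sum.inl i)) (le_of_eq (Finset.sum_congr rfl fun g _ => ?_))
    simp only [emaxVal]
    rfl
  have hxcard : 2 ≤ ((A (Sum.inl i)).filter
      (fun g => g = s ∨ g = s + 2*o + 1 ∨ g = s + 2*o + 4 ∨ g = s + 2*(o+ob) + 5)).card := by
    rw [Finset.card_filter]; exact hxsum
  constructor
  · -- right case
    intro hw3 g hg1 hg2
    -- w1 and w2 are not in A (inl i)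
    have hw1 : s ∉ A (Sum.inl i) := fun h =>
      hv1x (mem_between hIco h hw3 (by omega) (by omega))
    have hw2 : s + 2*o + 1 ∉ A (Sum.inl i) := fun h =>
      hv1x (mem_between hIco h hw3 (by omega) (by omega))
    have hsub : ((A (Sum.inl i)).filter
        (fun g => g = s ∨ g = s + 2*o + 1 ∨ g = s + 2*o + 4 ∨ g = s + 2*(o+ob) + 5)) ⊆
        {s + 2*o + 4, s + 2*(o+ob) + 5} := by
      intro x hx
      rw [Finset.mem_filter] at hx
      rcases hx.2 with rfl | rfl | rfl | rfl
      · exact absurd hx.1 hw1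
      · exact absurd hx.1 hw2
      · exact Finset.mem_insert_self _ _
      · exact Finset.mem_insert_of_mem (Finset.mem_singleton_self _)
    have heq := Finset.eq_of_subset_of_card_le hsub
      (by rw [Finset.card_pair (by omega)]; exact hxcard)
    have hw4 : s + 2*(o+ob) + 5 ∈ A (Sum.inl i) :=
      Finset.filter_subset _ _
        (heq ▸ Finset.mem_insert_of_mem (Finset.mem_singleton_self _))
    exact mem_between hIco hw3 hw4 hg1 hg2
  · -- left case
    intro hw3 g hg1 hg2
    have hw4 : s + 2*(o+ob) + 5 ∉ A (Sum.inl i) := by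
      intro hw4
      -- then at least one of w1, w2 in A, sandwiching the divider item
      by_cases hw1 : s ∈ A (Sum.inl i)
      · exact hv1x (mem_between hIco hw1 hw4 (by omega) (by omega))
      by_cases hw2 : s + 2*o + 1 ∈ A (Sum.inl i)
      · exact hv1x (mem_between hIco hw2 hw4 (by omega) (by omega))
      -- filter ⊆ {w4}, contradicting card ≥ 2
      have hsub : ((A (Sum.inl i)).filter
          (fun g => g = s ∨ g = s + 2*o + 1 ∨ g = s + 2*o + 4 ∨ g = s + 2*(o+ob) + 5)) ⊆
          {s + 2*(o+ob) + 5} := by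
        intro x hx
        rw [Finset.mem_filter] at hx
        rcases hx.2 with rfl | rfl | rfl | rfl
        · exact absurd hx.1 hw1
        · exact absurd hx.1 hw2
        · exact absurd hx.1 hw3
        · exact Finset.mem_singleton_self _
      have := Finset.card_le_card hsub
      rw [Finset.card_singleton] at this
      omega
    have hsub : ((A (Sum.inl i)).filter
        (fun g => g = s ∨ g = s + 2*o + 1 ∨ g = s + 2*o + 4 ∨ g = s + 2*(o+ob) + 5)) ⊆
        {s, s + 2*o + 1} := by
      intro x hx
      rw [Finset.mem_filter] at hx
      rcases hx.2 with rfl | rfl | rfl | rfl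
      · exact Finset.mem_insert_self _ _
      · exact Finset.mem_insert_of_mem (Finset.mem_singleton_self _)
      · exact absurd hx.1 hw3
      · exact absurd hx.1 hw4
    have heq := Finset.eq_of_subset_of_card_le hsub
      (by rw [Finset.card_pair (by omega)]; exact hxcard)
    have hm1 : s ∈ A (Sum.inl i) :=
      Finset.filter_subset _ _ (heq ▸ Finset.mem_insert_self _ _)
    have hm2 : s + 2*o + 1 ∈ A (Sum.inl i) :=
      Finset.filter_subset _ _
        (heq ▸ Finset.mem_insert_of_mem (Finset.mem_singleton_self _))
    exact mem_between hIco hm1 hm2 hg1 hg2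

end Forward
end EmaxF

namespace EmaxF
open EmaxAux EmaxAux2 EmaxB
variable {n m : ℕ} {C : Fin m → Fin 3 → Fin n × Bool}
variable {A : (Fin n ⊕ Fin (n + 1) ⊕ Fin m × Fin 3) → Finset ℕ}

theorem forward (hIco : ∀ i, ∃ a b, A i = Finset.Ico a b)
    (hdis : ∀ i i', i ≠ i' → Disjoint (A i) (A i'))
    (hval : ∀ i, 2 ≤ ∑ g ∈ A i, emaxVal n m C i g) :
    ∃ σ : Fin n → Bool, ∀ j : Fin m, ∃ t : Fin 3, σ (C j t).1 = (C j t).2 := by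
  classical
  refine ⟨fun i => decide (blockStart n m C i + 2 * occCnt n m C true i + 4 ∈ A (Sum.inl i)),
    fun j => ?_⟩
  by_contra hno
  push_neg at hno
  have hkey : ∀ t : Fin 3, 2 ≤ ((A (Sum.inr (Sum.inr (j, t)))).filter
      (fun g => 6*n+6*m+2+4*(j:ℕ) ≤ g ∧ g < 6*n+6*m+2+4*(j:ℕ)+4)).card := by
    intro t
    have hr := rank_lt_cnt (C := C) j t
    have hblock := forward_block hIco hdis hval (C j t).1
    -- the two occurrence items of (j, t) belong to the variable agent
    have hbase : ∀ g : ℕ,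
        (g = (if (C j t).2 then blockStart n m C ((C j t).1 : ℕ) + 1 + 2*occRank C j t
            else blockStart n m C ((C j t).1 : ℕ) + 2*occCnt n m C true ((C j t).1 : ℕ)
              + 5 + 2*occRank C j t) ∨
         g = (if (C j t).2 then blockStart n m C ((C j t).1 : ℕ) + 1 + 2*occRank C j t
            else blockStart n m C ((C j t).1 : ℕ) + 2*occCnt n m C true ((C j t).1 : ℕ)
              + 5 + 2*occRank C j t) + 1) → g ∈ A (Sum.inl (C j t).1) := by
      intro g hg
      by_cases hb : (C j t).2 = true
      · rw [hb] at hr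
        rw [if_pos hb] at hg
        have hP : ¬ (blockStart n m C ((C j t).1 : ℕ)
            + 2 * occCnt n m C true ((C j t).1 : ℕ) + 4 ∈ A (Sum.inl (C j t).1)) := by
          intro h
          exact hno t (by rw [hb]; simp [h])
        rcases hg with rfl | rfl
        · exact hblock.2 hP _ (by omega) (by omega)
        · exact hblock.2 hP _ (by omega) (by omega)
      · rw [Bool.not_eq_true] at hb
        rw [hb] at hr
        rw [if_neg (by simp [hb])] at hg
        have hP : blockStart n m C ((C j t).1 : ℕ)
            + 2 * occCnt n m C true ((C j t).1 : ℕ) + 4 ∈ A (Sum.inl (C j t).1) := by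
          by_contra h
          exact hno t (by rw [hb]; simp [h])
        rcases hg with rfl | rfl
        · exact hblock.1 hP _ (by omega) (by omega)
        · exact hblock.1 hP _ (by omega) (by omega)
    have hnea : (Sum.inl (C j t).1 : Fin n ⊕ Fin (n + 1) ⊕ Fin m × Fin 3) ≠
        Sum.inr (Sum.inr (j, t)) := fun h => by cases h
    have hsum : 2 ≤ ∑ g ∈ A (Sum.inr (Sum.inr (j, t))),
        if g = (if (C j t).2 then blockStart n m C ((C j t).1 : ℕ) + 1 + 2*occRank C j t
            else blockStart n m C ((C j t).1 : ℕ) + 2*occCnt n m C true ((C j t).1 : ℕ)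
              + 5 + 2*occRank C j t) ∨
           g = (if (C j t).2 then blockStart n m C ((C j t).1 : ℕ) + 1 + 2*occRank C j t
            else blockStart n m C ((C j t).1 : ℕ) + 2*occCnt n m C true ((C j t).1 : ℕ)
              + 5 + 2*occRank C j t) + 1 ∨
           (6*n+6*m+2+4*(j:ℕ) ≤ g ∧ g < 6*n+6*m+2+4*(j:ℕ)+4)
        then 1 else 0 := by
      refine le_trans (hval (Sum.inr (Sum.inr (j, t))))
        (le_of_eq (Finset.sum_congr rfl fun g _ => ?_))
      simp only [emaxVal]
    rw [show (2 : ℕ) ≤ _ ↔ 2 ≤ ((A (Sum.inr (Sum.inr (j, t)))).filter _).card from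
      Iff.intro (fun h => by rwa [Finset.card_filter]) (fun h => by rwa [← Finset.card_filter])]
      at hsum
    refine le_trans hsum (Finset.card_le_card ?_)
    intro x hx
    rw [Finset.mem_filter] at hx ⊢
    refine ⟨hx.1, ?_⟩
    rcases hx.2 with h | h | h
    · exact absurd hx.1 (fun hmem =>
        Finset.disjoint_left.1 (hdis _ _ hnea) (hbase x (Or.inl h)) hmem)
    · exact absurd hx.1 (fun hmem =>
        Finset.disjoint_left.1 (hdis _ _ hnea) (hbase x (Or.inr h)) hmem)
    · exact h
  -- three disjoint subsets of a 4-element interval, each of size ≥ 2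
  set K := Finset.Ico (6*n+6*m+2+4*(j:ℕ)) (6*n+6*m+2+4*(j:ℕ)+4) with hK
  set B : Fin 3 → Finset ℕ := fun t => (A (Sum.inr (Sum.inr (j, t)))).filter
      (fun g => 6*n+6*m+2+4*(j:ℕ) ≤ g ∧ g < 6*n+6*m+2+4*(j:ℕ)+4) with hB
  have hBsub : ∀ t, B t ⊆ K := by
    intro t x hx
    rw [hB, Finset.mem_filter] at hx
    rw [hK, Finset.mem_Ico]
    exact hx.2
  have hBdis : ∀ t t' : Fin 3, t ≠ t' → Disjoint (B t) (B t') := by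
    intro t t' hne
    refine Disjoint.mono (Finset.filter_subset _ _) (Finset.filter_subset _ _)
      (hdis _ _ fun h => ?_)
    apply hne
    injection (Sum.inr_injective (Sum.inr_injective h)) with h1 h2
  have hunion : B 0 ∪ B 1 ∪ B 2 ⊆ K :=
    Finset.union_subset (Finset.union_subset (hBsub 0) (hBsub 1)) (hBsub 2)
  have hcard : (B 0 ∪ B 1 ∪ B 2).card = (B 0).card + (B 1).card + (B 2).card := by
    rw [Finset.card_union_of_disjoint, Finset.card_union_of_disjoint]
    · exact hBdis 0 1 (by decide)
    · refine Finset.disjoint_union_left.2 ⟨hBdis 0 2 (by decide), hBdis 1 2 (by decide)⟩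
  have hKcard : K.card = 4 := by rw [hK, Nat.card_Ico]; omega
  have h0 := hkey 0
  have h1 := hkey 1
  have h2 := hkey 2
  have hle := Finset.card_le_card hunion
  rw [hcard, hKcard] at hle
  have hb0 : 2 ≤ (B 0).card := h0
  have hb1 : 2 ≤ (B 1).card := h1
  have hb2 : 2 ≤ (B 2).card := h2
  omega

end EmaxF

theorem emax_reduction_from_3SAT (n m : ℕ) (C : Fin m → Fin 3 → Fin n × Bool) :
    ((∃ A : (Fin n ⊕ Fin (n + 1) ⊕ Fin m × Fin 3) → Finset ℕ,
        (∀ i, ∃ a b, A i = Finset.Ico a b) ∧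
        (∀ i i', i ≠ i' → Disjoint (A i) (A i')) ∧
        Finset.univ.biUnion A = Finset.range (6 * n + 10 * m + 2) ∧
        ∀ i, 2 ≤ ∑ g ∈ A i, emaxVal n m C i g) ↔
      (∃ σ : Fin n → Bool, ∀ j : Fin m, ∃ t : Fin 3, σ (C j t).1 = (C j t).2)) ∧
    (¬(∃ σ : Fin n → Bool, ∀ j : Fin m, ∃ t : Fin 3, σ (C j t).1 = (C j t).2) →
      ∀ A : (Fin n ⊕ Fin (n + 1) ⊕ Fin m × Fin 3) → Finset ℕ,
        (∀ i, ∃ a b, A i = Finset.Ico a b) →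
        (∀ i i', i ≠ i' → Disjoint (A i) (A i')) →
        Finset.univ.biUnion A = Finset.range (6 * n + 10 * m + 2) →
        ∃ i, ∑ g ∈ A i, emaxVal n m C i g ≤ 1) := by
  classical
  have main : (∃ A : (Fin n ⊕ Fin (n + 1) ⊕ Fin m × Fin 3) → Finset ℕ,
        (∀ i, ∃ a b, A i = Finset.Ico a b) ∧
        (∀ i i', i ≠ i' → Disjoint (A i) (A i')) ∧
        Finset.univ.biUnion A = Finset.range (6 * n + 10 * m + 2) ∧
        ∀ i, 2 ≤ ∑ g ∈ A i, emaxVal n m C i g) ↔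
      (∃ σ : Fin n → Bool, ∀ j : Fin m, ∃ t : Fin 3, σ (C j t).1 = (C j t).2) := by
    constructor
    · rintro ⟨A, hIco, hdis, hcov, hval⟩
      exact EmaxF.forward hIco hdis hval
    · rintro ⟨σ, hσ⟩
      refine ⟨EmaxB.bund n m C σ, fun i => EmaxB.bund_isIco i,
        EmaxB.bund_disjoint hσ, ?_, fun a => EmaxB.bund_value a⟩
      apply Finset.Subset.antisymm
      · intro g hg
        rw [Finset.mem_biUnion] at hg
        obtain ⟨a, -, ha⟩ := hg
        exact EmaxB.bund_sub_range a ha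
      · intro g hg
        rw [Finset.mem_range] at hg
        obtain ⟨a, ha⟩ := EmaxB.bund_cover (n := n) (m := m) (C := C) (σ := σ) hg
        exact Finset.mem_biUnion.2 ⟨a, Finset.mem_univ _, ha⟩
  refine ⟨main, ?_⟩
  intro hunsat A hIco hdis hcov
  by_contra hc
  push_neg at hc
  exact hunsat (main.1 ⟨A, hIco, hdis, hcov, fun i => by have := hc i; omega⟩)
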